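/- arXiv:2410.22031 — 4 statements merged into one kernel-verified Lean document; each statement's English description precedes it below -/
import Mathlib

section
/- For real numbers $x_a > 0$, $y_0 > 0$, and $y_a > y_b$, the inequality $(x_a^2 + (y_b - y_0)^2)^{3/2} + (x_a^2 + y_a^2)^{3/2} > (x_a^2 + (y_a - y_0)^2)^{3/2} + (x_a^2 + y_b^2)^{3/2}$ holds. -/
lemma sqrt_deriv_aux (xa : ℝ) (hxa : 0 < xa) (y : ℝ) :
    HasDerivAt (fun t : ℝ => Real.sqrt (xa ^ 2 + t ^ 2)) (y / Real.sqrt (xa ^ 2 + y ^ 2)) y := by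
  have hu : (0:ℝ) < xa ^ 2 + y ^ 2 := by positivity
  have hs : Real.sqrt (xa ^ 2 + y ^ 2) ≠ 0 := by positivity
  have h1 : HasDerivAt (fun t : ℝ => xa ^ 2 + t ^ 2) (2 * y) y := by
    simpa using (hasDerivAt_pow 2 y).const_add (xa ^ 2)
  have h2 := (Real.hasDerivAt_sqrt hu.ne').comp y h1
  refine h2.congr_deriv ?_
  field_simp

lemma cube_deriv_aux (xa : ℝ) (hxa : 0 < xa) (y : ℝ) :
    HasDerivAt (fun t : ℝ => Real.sqrt (xa ^ 2 + t ^ 2) ^ 3)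
      (3 * y * Real.sqrt (xa ^ 2 + y ^ 2)) y := by
  have hu : (0:ℝ) ≤ xa ^ 2 + y ^ 2 := by positivity
  have hs : Real.sqrt (xa ^ 2 + y ^ 2) ≠ 0 := by positivity
  have h := (sqrt_deriv_aux xa hxa y).pow 3
  refine h.congr_deriv ?_
  have hsq : Real.sqrt (xa ^ 2 + y ^ 2) ^ 2 = xa ^ 2 + y ^ 2 := Real.sq_sqrt hu
  field_simp
  linear_combination

lemma mono_aux (xa : ℝ) (hxa : 0 < xa) :
    StrictMono (fun t : ℝ => t * Real.sqrt (xa ^ 2 + t ^ 2)) := by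
  apply strictMono_of_deriv_pos
  intro y
  have h : HasDerivAt (fun t : ℝ => t * Real.sqrt (xa ^ 2 + t ^ 2))
      (1 * Real.sqrt (xa ^ 2 + y ^ 2) + y * (y / Real.sqrt (xa ^ 2 + y ^ 2))) y :=
    (hasDerivAt_id y).mul (sqrt_deriv_aux xa hxa y)
  rw [h.deriv]
  have hs : (0:ℝ) < Real.sqrt (xa ^ 2 + y ^ 2) := by positivity
  have : y * (y / Real.sqrt (xa ^ 2 + y ^ 2)) = y ^ 2 / Real.sqrt (xa ^ 2 + y ^ 2) := by ring
  rw [this]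
  positivity

theorem stmt_2 (xa y0 ya yb : ℝ) (hxa : 0 < xa) (hy0 : 0 < y0) (hab : yb < ya) :
    (Real.sqrt (xa ^ 2 + (ya - y0) ^ 2)) ^ 3 + (Real.sqrt (xa ^ 2 + yb ^ 2)) ^ 3
      < (Real.sqrt (xa ^ 2 + (yb - y0) ^ 2)) ^ 3 + (Real.sqrt (xa ^ 2 + ya ^ 2)) ^ 3 := by
  have hG : StrictAnti (fun y : ℝ =>
      Real.sqrt (xa ^ 2 + (y - y0) ^ 2) ^ 3 - Real.sqrt (xa ^ 2 + y ^ 2) ^ 3) := by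
    apply strictAnti_of_deriv_neg
    intro y
    have h1 : HasDerivAt (fun t : ℝ => Real.sqrt (xa ^ 2 + (t - y0) ^ 2) ^ 3)
        (3 * (y - y0) * Real.sqrt (xa ^ 2 + (y - y0) ^ 2) * 1) y :=
      by have := (cube_deriv_aux xa hxa (y - y0)).comp y ((hasDerivAt_id y).sub_const y0); exact this
    have h : HasDerivAt (fun t : ℝ => Real.sqrt (xa ^ 2 + (t - y0) ^ 2) ^ 3 - Real.sqrt (xa ^ 2 + t ^ 2) ^ 3) _ y := h1.sub (cube_deriv_aux xa hxa y)
    rw [h.deriv]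
    have hm := mono_aux xa hxa (show y - y0 < y by linarith)
    simp only at hm
    nlinarith [hm]
  have := hG hab
  simp only at this
  linarith
end

section
/- In a trapezoid $P_a P_b P_b' P_a'$ in the Euclidean plane with parallel bases $P_a P_b$ and $P_a' P_b'$ (bases lying on two distinct parallel lines, with $P_a, P_a'$ on the same side), the sum of the cubes of the diagonals strictly exceeds the sum of the cubes of the legs: $|P_a P_b'|^3 + |P_b P_a'|^3 > |P_a P_a'|^3 + |P_b P_b'|^3$. -/
lemma conv_cube (xa u v l m : ℝ) (hxa : 0 < xa) (huv : v < u)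
    (hl : 0 < l) (hm : 0 < m) (hlm : l + m = 1) :
    Real.sqrt (xa^2 + (l*u + m*v)^2) ^ 3
      < l * Real.sqrt (xa^2 + u^2) ^ 3 + m * Real.sqrt (xa^2 + v^2) ^ 3 := by
  obtain rfl : m = 1 - l := by linarith
  set A := Real.sqrt (xa^2 + u^2) with hA
  set B := Real.sqrt (xa^2 + v^2) with hB
  set C := Real.sqrt (xa^2 + (l*u + (1-l)*v)^2) with hC
  have hA0 : 0 < A := Real.sqrt_pos.mpr (by positivity)
  have hB0 : 0 < B := Real.sqrt_pos.mpr (by positivity)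
  have hC0 : 0 ≤ C := Real.sqrt_nonneg _
  have hA2 : A^2 = xa^2 + u^2 := Real.sq_sqrt (by positivity)
  have hB2 : B^2 = xa^2 + v^2 := Real.sq_sqrt (by positivity)
  have hC2 : C^2 = xa^2 + (l*u + (1-l)*v)^2 := Real.sq_sqrt (by positivity)
  have huv0 : 0 < u - v := sub_pos.mpr huv
  have hABsq : (xa^2 + u*v)^2 < (A*B)^2 := by
    have h : (A*B)^2 = (xa^2+u^2)*(xa^2+v^2) := by rw [mul_pow, hA2, hB2]
    have hx : 0 < xa^2 * (u-v)^2 := by positivity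
    nlinarith
  have hAB : xa^2 + u*v < A*B := by
    nlinarith [mul_pos hA0 hB0]
  have hClt : C < l*A + (1-l)*B := by
    have key : (l*A + (1-l)*B)^2 - C^2 = 2*l*(1-l)*(A*B - (xa^2+u*v)) := by
      linear_combination (l^2)*hA2 + ((1-l)^2)*hB2 - hC2
    have h1 : C^2 < (l*A + (1-l)*B)^2 := by
      nlinarith [mul_pos (mul_pos hl hm) (sub_pos.mpr hAB)]
    nlinarith [mul_pos hl hA0, mul_pos hm hB0]
  have hCcube : C^3 < (l*A + (1-l)*B)^3 :=
    pow_lt_pow_left₀ hClt hC0 (by norm_num)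
  have hfin : (l*A + (1-l)*B)^3 ≤ l * A^3 + (1-l) * B^3 := by
    nlinarith [mul_nonneg (mul_nonneg (mul_pos hl hm).le (sq_nonneg (A-B))) hA0.le,
      mul_nonneg (mul_nonneg (mul_pos hl hm).le (sq_nonneg (A-B))) hB0.le,
      mul_nonneg (mul_nonneg (mul_nonneg hl.le (mul_pos hl hm).le) (sq_nonneg (A-B))) hA0.le,
      mul_nonneg (mul_nonneg (mul_nonneg hm.le (mul_pos hl hm).le) (sq_nonneg (A-B))) hB0.le]
  linarith

theorem stmt_3 (xa y0 ya yb : ℝ) (hxa : 0 < xa) (hy0 : 0 < y0) (hab : yb < ya) :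
    let Pa : EuclideanSpace ℝ (Fin 2) := (!₂[0, ya] : EuclideanSpace ℝ (Fin 2))
    let Pb : EuclideanSpace ℝ (Fin 2) := (!₂[0, yb] : EuclideanSpace ℝ (Fin 2))
    let Pa' : EuclideanSpace ℝ (Fin 2) := (!₂[xa, y0] : EuclideanSpace ℝ (Fin 2))
    let Pb' : EuclideanSpace ℝ (Fin 2) := (!₂[xa, 0] : EuclideanSpace ℝ (Fin 2))
    dist Pa Pa' ^ 3 + dist Pb Pb' ^ 3 < dist Pa Pb' ^ 3 + dist Pb Pa' ^ 3 := by
  intro Pa Pb Pa' Pb'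
  have hd1 : dist Pa Pa' = Real.sqrt (xa^2 + (ya - y0)^2) := by
    rw [EuclideanSpace.dist_eq]
    congr 1
    simp [Fin.sum_univ_two, Pa, Pa', Real.dist_eq, sq_abs]
    try ring
  have hd2 : dist Pb Pb' = Real.sqrt (xa^2 + yb^2) := by
    rw [EuclideanSpace.dist_eq]
    congr 1
    simp [Fin.sum_univ_two, Pb, Pb', Real.dist_eq, sq_abs]
    try ring
  have hd3 : dist Pa Pb' = Real.sqrt (xa^2 + ya^2) := by
    rw [EuclideanSpace.dist_eq]
    congr 1
    simp [Fin.sum_univ_two, Pa, Pb', Real.dist_eq, sq_abs]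
    try ring
  have hd4 : dist Pb Pa' = Real.sqrt (xa^2 + (yb - y0)^2) := by
    rw [EuclideanSpace.dist_eq]
    congr 1
    simp [Fin.sum_univ_two, Pb, Pa', Real.dist_eq, sq_abs]
    try ring
  rw [hd1, hd2, hd3, hd4]
  set l : ℝ := (ya - yb) / (ya - yb + y0) with hldef
  set m : ℝ := y0 / (ya - yb + y0) with hmdef
  have hden : 0 < ya - yb + y0 := by linarith
  have hl : 0 < l := div_pos (by linarith) hden
  have hm : 0 < m := div_pos hy0 hden
  have hlm : l + m = 1 := by
    rw [hldef, hmdef, ← add_div, div_self hden.ne']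
  have huv : yb - y0 < ya := by linarith
  have h1 := conv_cube xa ya (yb - y0) l m hxa huv hl hm hlm
  have h2 := conv_cube xa ya (yb - y0) m l hxa huv hm hl (by linarith)
  have e1 : l * ya + m * (yb - y0) = ya - y0 := by
    rw [hldef, hmdef]; field_simp; ring
  have e2 : m * ya + l * (yb - y0) = yb := by
    rw [hldef, hmdef]; field_simp; ring
  rw [e1] at h1
  rw [e2] at h2
  have hX : l * Real.sqrt (xa^2 + ya^2) ^ 3 + m * Real.sqrt (xa^2 + ya^2) ^ 3
      = Real.sqrt (xa^2 + ya^2) ^ 3 := by rw [← add_mul, hlm, one_mul]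
  have hY : m * Real.sqrt (xa^2 + (yb - y0)^2) ^ 3 + l * Real.sqrt (xa^2 + (yb - y0)^2) ^ 3
      = Real.sqrt (xa^2 + (yb - y0)^2) ^ 3 := by rw [← add_mul, add_comm m l, hlm, one_mul]
  linarith
end

section
/- Let $\gamma : [s_0, s_f] \to \mathbb{R}^2$ be a curve, $n : [s_0,s_f] \to \mathbb{R}^2$ a map with $n(s) \neq 0$ for all $s$, and $r : [s_0,s_f] \times \{0, \pi\} \to \mathbb{R}$ with $r(s, \theta) > 0$. Define the trajectory position $p(s, \theta, \lambda_{init}) = \gamma(s) + \lambda(s, \theta, \lambda_{init}) r(s, \theta) n(s) \cos\theta$ where $\lambda(s, \theta, \lambda_{init}) = 1 - \frac{(1-\lambda_{init}) r(s_0, \theta)(r(s,0) + r(s,\pi))}{r(s,\theta)(r(s_0,0) + r(s_0,\pi))}$. Then for any $s$, $\theta_1, \theta_2 \in \{0, \pi\}$, $\lambda_1, \lambda_2 \in [0,1]$, if either ($\theta_1 = \theta_2$ and $\lambda_1 \neq \lambda_2$) or ($\theta_1 \neq \theta_2$ and $|\lambda_1| + |\lambda_2| \neq 0$), then $p(s,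 \theta_1, \lambda_1) \neq p(s, \theta_2, \lambda_2)$. -/
theorem stmt_7 (s0 sf : ℝ)
    (γ n : ℝ → EuclideanSpace ℝ (Fin 2)) (r : ℝ → ℝ → ℝ)
    (hn : ∀ s ∈ Set.Icc s0 sf, n s ≠ 0)
    (hr : ∀ s ∈ Set.Icc s0 sf, ∀ θ ∈ ({0, Real.pi} : Set ℝ), 0 < r s θ)
    (lam : ℝ → ℝ → ℝ → ℝ)
    (hlam : ∀ s θ li, lam s θ li =
      1 - (1 - li) * r s0 θ * (r s 0 + r s Real.pi)
        / (r s θ * (r s0 0 + r s0 Real.pi)))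
    (p : ℝ → ℝ → ℝ → EuclideanSpace ℝ (Fin 2))
    (hp : ∀ s θ li, p s θ li =
      γ s + (lam s θ li * r s θ * Real.cos θ) • n s) :
    ∀ s ∈ Set.Icc s0 sf,
      ∀ θ1 ∈ ({0, Real.pi} : Set ℝ), ∀ θ2 ∈ ({0, Real.pi} : Set ℝ),
      ∀ l1 ∈ Set.Icc (0 : ℝ) 1, ∀ l2 ∈ Set.Icc (0 : ℝ) 1,
        ((θ1 = θ2 ∧ l1 ≠ l2) ∨ (θ1 ≠ θ2 ∧ |l1| + |l2| ≠ 0)) →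
          p s θ1 l1 ≠ p s θ2 l2 := by
  intro s hs θ1 hθ1 θ2 hθ2 l1 hl1 l2 hl2 hcond heq
  have hs0 : s0 ∈ Set.Icc s0 sf := ⟨le_refl _, le_trans hs.1 hs.2⟩
  have h0 : (0 : ℝ) ∈ ({0, Real.pi} : Set ℝ) := by simp
  have hpi : Real.pi ∈ ({0, Real.pi} : Set ℝ) := by simp
  have ha := hr s0 hs0 0 h0
  have hb := hr s0 hs0 Real.pi hpi
  have hA := hr s hs 0 h0
  have hB := hr s hs Real.pi hpi
  have hD : r s0 0 + r s0 Real.pi ≠ 0 := by positivity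
  -- equality of coefficients
  have hcoef : lam s θ1 l1 * r s θ1 * Real.cos θ1
      = lam s θ2 l2 * r s θ2 * Real.cos θ2 := by
    rw [hp, hp] at heq
    have h2 := add_left_cancel heq
    by_contra hne
    have := sub_eq_zero.2 h2
    rw [← sub_smul, smul_eq_zero] at this
    rcases this with h | h
    · exact hne (sub_eq_zero.1 h)
    · exact hn s hs h
  rw [hlam, hlam] at hcoef
  have hl10 := hl1.1
  have hl20 := hl2.1
  have e1 : θ1 = 0 ∨ θ1 = Real.pi := by simpa using hθ1
  have e2 : θ2 = 0 ∨ θ2 = Real.pi := by simpa using hθ2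
  rcases e1 with h1 | h1 <;> rcases e2 with h2 | h2 <;> subst h1 <;> subst h2
  · obtain hl : l1 ≠ l2 := by
      rcases hcond with ⟨_, h⟩ | ⟨h, _⟩
      · exact h
      · exact absurd rfl h
    rw [Real.cos_zero] at hcoef
    apply hl
    have hA' := hA.ne'
    field_simp at hcoef
    have hS : r s0 0 * (r s 0 + r s Real.pi) ≠ 0 := by positivity
    have hm : (r s0 0 * (r s 0 + r s Real.pi)) * (l1 - l2) = 0 := by
      ring_nf; ring_nf at hcoef; linarith
    exact sub_eq_zero.1 ((mul_eq_zero.1 hm).resolve_left hS)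
  · have hl : 0 < l1 + l2 := by
      rcases hcond with ⟨h, _⟩ | ⟨_, h⟩
      · exact absurd h Real.pi_ne_zero.symm
      · rw [abs_of_nonneg hl10, abs_of_nonneg hl20] at h
        rcases lt_or_eq_of_le (by linarith : (0:ℝ) ≤ l1 + l2) with hlt | hh
        · exact hlt
        · exact absurd hh.symm h
    rw [Real.cos_zero, Real.cos_pi] at hcoef
    have hA' := hA.ne'
    have hB' := hB.ne'
    field_simp at hcoef
    have hkey : 0 < l1 * r s0 0 + l2 * r s0 Real.pi := by
      rcases (lt_or_eq_of_le hl10) with h | h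
      · nlinarith [mul_pos h ha, mul_nonneg hl20 hb.le]
      · have h2 : 0 < l2 := by linarith
        nlinarith [mul_pos h2 hb, mul_nonneg hl10 ha.le]
    nlinarith [hcoef, mul_pos (mul_pos (mul_pos hA hB) (add_pos ha hb)) (mul_pos (add_pos hA hB) hkey)]
  · have hl : 0 < l1 + l2 := by
      rcases hcond with ⟨h, _⟩ | ⟨_, h⟩
      · exact absurd h Real.pi_ne_zero
      · rw [abs_of_nonneg hl10, abs_of_nonneg hl20] at h
        rcases lt_or_eq_of_le (by linarith : (0:ℝ) ≤ l1 + l2) with hlt | hh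
        · exact hlt
        · exact absurd hh.symm h
    rw [Real.cos_zero, Real.cos_pi] at hcoef
    have hA' := hA.ne'
    have hB' := hB.ne'
    field_simp at hcoef
    have hkey : 0 < l1 * r s0 Real.pi + l2 * r s0 0 := by
      rcases (lt_or_eq_of_le hl10) with h | h
      · nlinarith [mul_pos h hb, mul_nonneg hl20 ha.le]
      · have h2 : 0 < l2 := by linarith
        nlinarith [mul_pos h2 ha, mul_nonneg hl10 hb.le]
    nlinarith [hcoef, mul_pos (mul_pos (mul_pos hA hB) (add_pos ha hb)) (mul_pos (add_pos hA hB) hkey)]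
  · obtain hl : l1 ≠ l2 := by
      rcases hcond with ⟨_, h⟩ | ⟨h, _⟩
      · exact h
      · exact absurd rfl h
    rw [Real.cos_pi] at hcoef
    apply hl
    have hB' := hB.ne'
    field_simp at hcoef
    have hS : r s0 Real.pi * (r s 0 + r s Real.pi) ≠ 0 := by positivity
    have hm : (r s0 Real.pi * (r s 0 + r s Real.pi)) * (l1 - l2) = 0 := by
      ring_nf; ring_nf at hcoef; linarith
    exact sub_eq_zero.1 ((mul_eq_zero.1 hm).resolve_left hS)
end

section
/- With the trapezoid setup $P_a = (0, y_a)$, $P_b = (0, y_b)$, $P_a' = (x_a, y_0)$, $P_b' = (x_a, 0)$ where $x_a > 0$, $y_0 > 0$, $y_a > y_b$, and with energy $E(\xi_a, \xi_b) = C(\|\xi_a\|^3 + \|\xi_b\|^3)$ for any constant $C > 0$: the non-crossing assignment ($\xi_a = P_a' - P_a$, $\xi_b = P_b' - P_b$) has strictly smaller energy than the crossing assignment ($\xi_a = P_b' - P_a$, $\xi_b = P_a' - P_b$). -/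
private lemma hasDerivAt_f (c : ℝ) (hc : 0 < c) (s : ℝ) :
    HasDerivAt (fun t : ℝ => Real.sqrt (c + t ^ 2) ^ 3)
      (3 * s * Real.sqrt (c + s ^ 2)) s := by
  have hpos : 0 < c + s ^ 2 := by positivity
  have h1 : HasDerivAt (fun t : ℝ => c + t ^ 2) (2 * s) s := by
    simpa using ((hasDerivAt_pow 2 s).const_add c)
  have h2 : HasDerivAt Real.sqrt (1 / (2 * Real.sqrt (c + s ^ 2))) (c + s ^ 2) :=
    Real.hasDerivAt_sqrt hpos.ne'
  have h3 := (h2.comp s h1).pow 3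
  have hsq : Real.sqrt (c + s ^ 2) ^ 2 = c + s ^ 2 := Real.sq_sqrt hpos.le
  have hspos : 0 < Real.sqrt (c + s ^ 2) := Real.sqrt_pos.2 hpos
  have heq : (3 : ℕ) * (Real.sqrt ∘ fun t : ℝ => c + t ^ 2) s ^ (3 - 1)
      * (1 / (2 * Real.sqrt (c + s ^ 2)) * (2 * s)) = 3 * s * Real.sqrt (c + s ^ 2) := by
    simp only [Function.comp]
    field_simp
    linear_combination
  rw [heq] at h3
  exact h3

private lemma phi_mono (c : ℝ) (hc : 0 < c) :
    StrictMono (fun s : ℝ => s * Real.sqrt (c + s ^ 2)) := by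
  apply strictMono_of_deriv_pos
  intro s
  have hpos : 0 < c + s ^ 2 := by positivity
  have hspos : 0 < Real.sqrt (c + s ^ 2) := Real.sqrt_pos.2 hpos
  have h1 : HasDerivAt (fun t : ℝ => c + t ^ 2) (2 * s) s := by
    simpa using ((hasDerivAt_pow 2 s).const_add c)
  have h2 : HasDerivAt Real.sqrt (1 / (2 * Real.sqrt (c + s ^ 2))) (c + s ^ 2) :=
    Real.hasDerivAt_sqrt hpos.ne'
  have hsq : Real.sqrt (c + s ^ 2) ^ 2 = c + s ^ 2 := Real.sq_sqrt hpos.le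
  have h3 : HasDerivAt (fun s : ℝ => s * Real.sqrt (c + s ^ 2))
      ((c + 2 * s ^ 2) / Real.sqrt (c + s ^ 2)) s := by
    have h4 := (hasDerivAt_id s).mul (h2.comp s h1)
    have heq : (1 : ℝ) * (Real.sqrt ∘ fun t : ℝ => c + t ^ 2) s
        + id s * (1 / (2 * Real.sqrt (c + s ^ 2)) * (2 * s))
        = (c + 2 * s ^ 2) / Real.sqrt (c + s ^ 2) := by
      simp only [Function.comp, id_eq]
      field_simp
      linear_combination hsq
    rw [heq] at h4
    exact h4
  rw [h3.deriv]
  positivity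

private lemma key (c y0 : ℝ) (hc : 0 < c) (hy0 : 0 < y0) {a b : ℝ} (hab : b < a) :
    Real.sqrt (c + (y0 - a) ^ 2) ^ 3 + Real.sqrt (c + b ^ 2) ^ 3
      < Real.sqrt (c + a ^ 2) ^ 3 + Real.sqrt (c + (y0 - b) ^ 2) ^ 3 := by
  set H : ℝ → ℝ := fun t => Real.sqrt (c + t ^ 2) ^ 3 - Real.sqrt (c + (y0 - t) ^ 2) ^ 3
    with hHdef
  have hH : StrictMono H := by
    apply strictMono_of_deriv_pos
    intro t
    have h1 : HasDerivAt H (3 * t * Real.sqrt (c + t ^ 2)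
        - (3 * (y0 - t) * Real.sqrt (c + (y0 - t) ^ 2)) * (-1)) t := by
      have hg : HasDerivAt (fun t : ℝ => y0 - t) (-1) t := by
        simpa using ((hasDerivAt_id t).const_sub y0)
      exact (hasDerivAt_f c hc t).sub ((hasDerivAt_f c hc (y0 - t)).comp t hg)
    rw [h1.deriv]
    have h2 : (-t) * Real.sqrt (c + (-t) ^ 2) < (y0 - t) * Real.sqrt (c + (y0 - t) ^ 2) :=
      phi_mono c hc (by linarith)
    rw [neg_sq] at h2
    nlinarith [h2]
  have hlt := hH hab
  simp only [hHdef] at hlt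
  linarith

theorem stmt_12 (xa y0 ya yb C : ℝ) (hxa : 0 < xa) (hy0 : 0 < y0)
    (hab : yb < ya) (hC : 0 < C) :
    let Pa : EuclideanSpace ℝ (Fin 2) := (!₂[0, ya] : EuclideanSpace ℝ (Fin 2))
    let Pb : EuclideanSpace ℝ (Fin 2) := (!₂[0, yb] : EuclideanSpace ℝ (Fin 2))
    let Pa' : EuclideanSpace ℝ (Fin 2) := (!₂[xa, y0] : EuclideanSpace ℝ (Fin 2))
    let Pb' : EuclideanSpace ℝ (Fin 2) := (!₂[xa, 0] : EuclideanSpace ℝ (Fin 2))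
    C * (‖Pa' - Pa‖ ^ 3 + ‖Pb' - Pb‖ ^ 3)
      < C * (‖Pb' - Pa‖ ^ 3 + ‖Pa' - Pb‖ ^ 3) := by
  intro Pa Pb Pa' Pb'
  have h1 : ‖Pa' - Pa‖ = Real.sqrt (xa ^ 2 + (y0 - ya) ^ 2) := by
    rw [EuclideanSpace.norm_eq]
    congr 1
    simp [Fin.sum_univ_two, sq_abs, Pa, Pa']
  have h2 : ‖Pb' - Pb‖ = Real.sqrt (xa ^ 2 + yb ^ 2) := by
    rw [EuclideanSpace.norm_eq]
    congr 1
    simp [Fin.sum_univ_two, sq_abs, Pb, Pb']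
  have h3 : ‖Pb' - Pa‖ = Real.sqrt (xa ^ 2 + ya ^ 2) := by
    rw [EuclideanSpace.norm_eq]
    congr 1
    simp [Fin.sum_univ_two, sq_abs, Pa, Pb']
  have h4 : ‖Pa' - Pb‖ = Real.sqrt (xa ^ 2 + (y0 - yb) ^ 2) := by
    rw [EuclideanSpace.norm_eq]
    congr 1
    simp [Fin.sum_univ_two, sq_abs, Pb, Pa']
  rw [h1, h2, h3, h4]
  have := key (xa ^ 2) y0 (by positivity) hy0 hab
  exact mul_lt_mul_of_pos_left this hC
end
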